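/- arXiv:0912.3183 — 2 statements merged into one kernel-verified Lean document; each statement's English description precedes it below -/
import Mathlib

section
/- On the interval [a,b] with 0 < a < b, the eigenvalues of the Berry-Keating operator H_BK = -i(x d/dx + 1/2) with boundary condition ψ(a) = √(b/a) e^{-2πic} ψ(b) (c ∈ [0,1)) are exactly k_n = 2π(n + c)/ln(b/a) for n ∈ ℤ, with eigenfunctions ψ_n(x) = x^{-1/2} e^{i k_n ln x}. -/
open Real Complex

lemma aux_deriv (α : ℂ) {x : ℝ} (hx : 0 < x) :
    HasDerivAt (fun y : ℝ => Complex.exp (α * (Real.log y : ℂ)))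
      (α / (x:ℂ) * Complex.exp (α * (Real.log x : ℂ))) x := by
  have h1 : HasDerivAt (fun y : ℝ => ((Real.log y : ℂ))) (((x⁻¹ : ℝ) : ℂ)) x :=
    (Real.hasDerivAt_log hx.ne').ofReal_comp
  have h2 := (h1.const_mul α).cexp
  convert h2 using 1
  have hx0 : (x:ℂ) ≠ 0 := by exact_mod_cast hx.ne'
  push_cast
  field_simp

lemma aux_ode (kn x : ℝ) (hx : 0 < x) (ψ : ℂ) :
    -Complex.I * ((x : ℂ) * ((-(1 / 2) + Complex.I * kn) / (x : ℂ) * ψ) + ψ / 2)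
      = (kn : ℂ) * ψ := by
  have hx0 : (x:ℂ) ≠ 0 := by exact_mod_cast hx.ne'
  field_simp
  linear_combination (-(2*(kn:ℂ)*ψ)) * Complex.I_sq

lemma aux_bc (a b c : ℝ) (ha : 0 < a) (hab : a < b) (n : ℤ) :
    Complex.exp ((-(1/2) + Complex.I * ((2*π*(n+c)/Real.log (b/a) : ℝ) : ℂ)) * (Real.log a : ℂ)) =
      (Real.sqrt (b/a) : ℂ) * Complex.exp (-(2*π*Complex.I*c)) *
      Complex.exp ((-(1/2) + Complex.I * ((2*π*(n+c)/Real.log (b/a) : ℝ) : ℂ)) * (Real.log b : ℂ)) := by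
  have hba : (0:ℝ) < b / a := div_pos (lt_trans ha hab) ha
  have hL : 0 < Real.log (b/a) := Real.log_pos ((one_lt_div ha).2 hab)
  have hsqrt : Real.sqrt (b/a) = Real.exp (Real.log (b/a) / 2) := by
    rw [← Real.log_sqrt hba.le, Real.exp_log (Real.sqrt_pos.2 hba)]
  have hla : (Real.log a : ℂ) = (Real.log b : ℂ) - (Real.log (b/a) : ℂ) := by
    rw [Real.log_div (lt_trans ha hab).ne' ha.ne']; push_cast; ring
  have hknL : ((2*π*(n+c)/Real.log (b/a) : ℝ) : ℂ) * (Real.log (b/a) : ℂ)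
      = 2*(π:ℂ)*((n:ℂ)+(c:ℂ)) := by
    have hL0 : (Real.log (b/a) : ℂ) ≠ 0 := by exact_mod_cast hL.ne'
    push_cast
    field_simp
  have e1 : (-(1/2) + Complex.I * ((2*π*(n+c)/Real.log (b/a) : ℝ) : ℂ)) * (Real.log a : ℂ)
      = ((Real.log (b/a) / 2 : ℝ) : ℂ) + (-(2*π*Complex.I*c)) + (((-n : ℤ) : ℂ) * (2*(π:ℂ)*Complex.I))
        + (-(1/2) + Complex.I * ((2*π*(n+c)/Real.log (b/a) : ℝ) : ℂ)) * (Real.log b : ℂ) := by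
    rw [hla]
    push_cast
    push_cast at hknL
    linear_combination (-Complex.I) * hknL
  rw [e1, Complex.exp_add, Complex.exp_add, Complex.exp_add,
    Complex.exp_int_mul_two_pi_mul_I, ← Complex.ofReal_exp, ← hsqrt]
  ring

/-- On `[a,b]` with `0 < a < b`, the eigenvalues of
`H_BK = -i(x d/dx + 1/2)` with boundary condition
`ψ(a) = √(b/a) e^{-2πic} ψ(b)` are exactly `k_n = 2π(n+c)/log(b/a)`,
`n ∈ ℤ`, with eigenfunctions `ψ_n(x) = x^{-1/2} e^{i k_n log x}`. -/
theorem stmt_15 (a b c : ℝ) (ha : 0 < a) (hab : a < b)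
    (hc : c ∈ Set.Ico (0 : ℝ) 1) (k : ℝ) :
    ((∃ ψ ψ' : ℝ → ℂ,
        (∃ x ∈ Set.Icc a b, ψ x ≠ 0) ∧
        (∀ x ∈ Set.Icc a b,
          HasDerivWithinAt ψ (ψ' x) (Set.Icc a b) x ∧
          -Complex.I * ((x : ℂ) * ψ' x + ψ x / 2) = (k : ℂ) * ψ x) ∧
        ψ a = (Real.sqrt (b / a) : ℂ) *
          Complex.exp (-(2 * π * Complex.I * c)) * ψ b)
      ↔ ∃ n : ℤ, k = 2 * π * (n + c) / Real.log (b / a)) ∧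
    -- the explicit eigenfunctions ψ_n(x) = x^{-1/2} e^{i k_n log x}
    (∀ n : ℤ,
      let kn : ℝ := 2 * π * (n + c) / Real.log (b / a)
      let ψn : ℝ → ℂ := fun y =>
        Complex.exp ((-(1 / 2) + Complex.I * kn) * (Real.log y : ℂ))
      (∀ x ∈ Set.Icc a b,
        HasDerivWithinAt ψn ((-(1 / 2) + Complex.I * kn) / (x : ℂ) * ψn x)
          (Set.Icc a b) x ∧
        -Complex.I * ((x : ℂ) * ((-(1 / 2) + Complex.I * kn) / (x : ℂ) * ψn x)
            + ψn x / 2) = (kn : ℂ) * ψn x) ∧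
      ψn a = (Real.sqrt (b / a) : ℂ) *
        Complex.exp (-(2 * π * Complex.I * c)) * ψn b) := by

  have hba : (0:ℝ) < b / a := div_pos (lt_trans ha hab) ha
  have hL : 0 < Real.log (b/a) := Real.log_pos ((one_lt_div ha).2 hab)
  have hsqrt : Real.sqrt (b/a) = Real.exp (Real.log (b/a) / 2) := by
    rw [← Real.log_sqrt hba.le, Real.exp_log (Real.sqrt_pos.2 hba)]
  have part2 : ∀ n : ℤ,
      let kn : ℝ := 2 * π * (n + c) / Real.log (b / a)
      let ψn : ℝ → ℂ := fun y =>
        Complex.exp ((-(1 / 2) + Complex.I * kn) * (Real.log y : ℂ))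
      (∀ x ∈ Set.Icc a b,
        HasDerivWithinAt ψn ((-(1 / 2) + Complex.I * kn) / (x : ℂ) * ψn x)
          (Set.Icc a b) x ∧
        -Complex.I * ((x : ℂ) * ((-(1 / 2) + Complex.I * kn) / (x : ℂ) * ψn x)
            + ψn x / 2) = (kn : ℂ) * ψn x) ∧
      ψn a = (Real.sqrt (b / a) : ℂ) *
        Complex.exp (-(2 * π * Complex.I * c)) * ψn b := by
    intro n kn ψn
    refine ⟨fun x hx => ?_, ?_⟩
    · have hxpos : 0 < x := lt_of_lt_of_le ha hx.1
      exact ⟨(aux_deriv _ hxpos).hasDerivWithinAt, aux_ode kn x hxpos (ψn x)⟩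
    · exact aux_bc a b c ha hab n
  refine ⟨⟨?_, ?_⟩, part2⟩
  · -- forward direction
    rintro ⟨ψ, ψ', ⟨x₀, hx₀, hψ₀⟩, hode, hbc⟩
    set α : ℂ := -(1/2) + Complex.I * k with hα
    have hψd : ∀ x ∈ Set.Icc a b, HasDerivWithinAt ψ (α / (x:ℂ) * ψ x) (Set.Icc a b) x := by
      intro x hx
      have hxpos : 0 < x := lt_of_lt_of_le ha hx.1
      have hx0 : (x:ℂ) ≠ 0 := by exact_mod_cast hxpos.ne'
      obtain ⟨hd, heq⟩ := hode x hx
      have hxψ : (x:ℂ) * ψ' x = α * ψ x := by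
        rw [hα]
        linear_combination Complex.I * heq + ((x:ℂ) * ψ' x + ψ x / 2) * Complex.I_sq
      have hval : ψ' x = α / (x:ℂ) * ψ x := by
        field_simp
        linear_combination hxψ
      rwa [hval] at hd
    set φ : ℝ → ℂ := fun x => ψ x * Complex.exp (-α * (Real.log x : ℂ)) with hφ
    have hφd : ∀ x ∈ Set.Icc a b, HasDerivWithinAt φ 0 (Set.Icc a b) x := by
      intro x hx
      have hxpos : 0 < x := lt_of_lt_of_le ha hx.1
      have hx0 : (x:ℂ) ≠ 0 := by exact_mod_cast hxpos.ne'
      have hd := (hψd x hx).mul ((aux_deriv (-α) hxpos).hasDerivWithinAt (s := Set.Icc a b))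
      convert hd using 1
      · rfl
      · rfl
      · ring
    have hcont : ContinuousOn φ (Set.Icc a b) := fun x hx => (hφd x hx).continuousWithinAt
    have hconst := constant_of_has_deriv_right_zero hcont (fun x hx =>
      (hφd x ⟨hx.1, hx.2.le⟩).mono_of_mem_nhdsWithin (Icc_mem_nhdsGE_of_mem hx))
    have hψeq : ∀ x ∈ Set.Icc a b, ψ x = φ a * Complex.exp (α * (Real.log x : ℂ)) := by
      intro x hx
      have h1 : ψ x * Complex.exp (-α * (Real.log x : ℂ)) = φ a := hconst x hx
      have hne : Complex.exp (α * (Real.log x : ℂ)) ≠ 0 := Complex.exp_ne_zero _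
      have h2 := congrArg (· * Complex.exp (α * (Real.log x : ℂ))) h1
      simp only [mul_assoc, ← Complex.exp_add] at h2
      rw [show -α * (Real.log x : ℂ) + α * (Real.log x : ℂ) = 0 by ring, Complex.exp_zero,
        mul_one] at h2
      exact h2
    have hC0 : φ a ≠ 0 := by
      intro h0
      apply hψ₀
      rw [hψeq x₀ hx₀, h0, zero_mul]
    have key : Complex.exp (α * (Real.log a : ℂ)) =
        (Real.sqrt (b/a) : ℂ) * Complex.exp (-(2*π*Complex.I*c)) *
        Complex.exp (α * (Real.log b : ℂ)) := by
      have h1 := hbc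
      rw [hψeq a ⟨le_rfl, hab.le⟩, hψeq b ⟨hab.le, le_rfl⟩] at h1
      apply mul_left_cancel₀ hC0
      linear_combination h1
    have hla : (Real.log a : ℂ) = (Real.log b : ℂ) - (Real.log (b/a) : ℂ) := by
      rw [Real.log_div (lt_trans ha hab).ne' ha.ne']; push_cast; ring
    have key2 : Complex.exp (-α * (Real.log (b/a) : ℂ)) =
        (Real.sqrt (b/a) : ℂ) * Complex.exp (-(2*π*Complex.I*c)) := by
      calc Complex.exp (-α * (Real.log (b/a) : ℂ))
          = Complex.exp (α * (Real.log a : ℂ)) * Complex.exp (-(α * (Real.log b : ℂ))) := by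
            rw [← Complex.exp_add, hla]; ring_nf
        _ = (Real.sqrt (b/a) : ℂ) * Complex.exp (-(2*π*Complex.I*c)) *
            Complex.exp (α * (Real.log b : ℂ)) * Complex.exp (-(α * (Real.log b : ℂ))) := by
            rw [key]
        _ = (Real.sqrt (b/a) : ℂ) * Complex.exp (-(2*π*Complex.I*c)) := by
            rw [mul_assoc, ← Complex.exp_add]; simp
    have key3 : Complex.exp (-(Complex.I * k * (Real.log (b/a) : ℂ))) =
        Complex.exp (-(2*π*Complex.I*c)) := by
      have hE : Complex.exp ((Real.log (b/a) / 2 : ℝ) : ℂ) ≠ 0 := Complex.exp_ne_zero _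
      apply mul_left_cancel₀ hE
      calc Complex.exp ((Real.log (b/a) / 2 : ℝ) : ℂ) *
            Complex.exp (-(Complex.I * k * (Real.log (b/a) : ℂ)))
          = Complex.exp (-α * (Real.log (b/a) : ℂ)) := by
            rw [← Complex.exp_add, hα]; congr 1; push_cast; ring
        _ = (Real.sqrt (b/a) : ℂ) * Complex.exp (-(2*π*Complex.I*c)) := key2
        _ = Complex.exp ((Real.log (b/a) / 2 : ℝ) : ℂ) * Complex.exp (-(2*π*Complex.I*c)) := by
            rw [hsqrt, Complex.ofReal_exp]
    have hone : Complex.exp (-(Complex.I * k * (Real.log (b/a) : ℂ)) + 2*π*Complex.I*c) = 1 := by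
      rw [Complex.exp_add, key3, ← Complex.exp_add]
      simp
    obtain ⟨m, hm⟩ := Complex.exp_eq_one_iff.1 hone
    have hreal : -(k * Real.log (b/a)) + 2*π*c = 2*π*m := by
      have h2 : Complex.I * ((-(k * Real.log (b/a)) + 2*π*c : ℝ) : ℂ)
          = Complex.I * ((2*π*(m:ℝ) : ℝ) : ℂ) := by
        push_cast
        linear_combination hm
      have h3 := mul_left_cancel₀ Complex.I_ne_zero h2
      exact_mod_cast h3
    refine ⟨-m, ?_⟩
    have hL0 : Real.log (b/a) ≠ 0 := hL.ne'
    field_simp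
    push_cast
    linarith [hreal]
  · -- reverse direction
    rintro ⟨n, hk⟩
    have h2 := part2 n
    simp only at h2
    refine ⟨fun y => Complex.exp ((-(1 / 2) + Complex.I * ((2 * π * (n + c) / Real.log (b / a) : ℝ) : ℂ)) * (Real.log y : ℂ)),
      fun x => (-(1 / 2) + Complex.I * ((2 * π * (n + c) / Real.log (b / a) : ℝ) : ℂ)) / (x : ℂ) *
        Complex.exp ((-(1 / 2) + Complex.I * ((2 * π * (n + c) / Real.log (b / a) : ℝ) : ℂ)) * (Real.log x : ℂ)),
      ⟨a, ⟨le_rfl, hab.le⟩, Complex.exp_ne_zero _⟩, ?_, ?_⟩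
    · intro x hx
      have hxpos : 0 < x := lt_of_lt_of_le ha hx.1
      refine ⟨(aux_deriv _ hxpos).hasDerivWithinAt, ?_⟩
      rw [hk]
      exact aux_ode _ x hxpos _
    · exact aux_bc a b c ha hab n
end

section
/- For 0 < a < b, the positive eigenvalues λ = k² of the operator H² ψ = -x²ψ'' - 2xψ' - ψ/4 on [a,b] with Dirichlet boundary conditions ψ(a) = ψ(b) = 0 are exactly k_n = πn/ln(b/a), n ∈ ℕ, n ≥ 1, with eigenfunctions ψ_n(x) = x^{-1/2} sin(k_n ln(x/a)); moreover λ = 0 is not an eigenvalue. -/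
open Real Complex

/-- `λ` is a Dirichlet eigenvalue of `H² ψ = -x²ψ'' - 2xψ' - ψ/4` on `[a,b]`:
there is a nonzero `C²` function `ψ` on `[a,b]` with
`-x²ψ'' - 2xψ' - ψ/4 = λψ` and `ψ(a) = ψ(b) = 0`. -/
def IsDirichletEigenvalue (a b : ℝ) (lam : ℂ) : Prop :=
  ∃ ψ ψ' ψ'' : ℝ → ℂ,
    (∃ x ∈ Set.Icc a b, ψ x ≠ 0) ∧
    (∀ x ∈ Set.Icc a b,
      HasDerivWithinAt ψ (ψ' x) (Set.Icc a b) x ∧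
      HasDerivWithinAt ψ' (ψ'' x) (Set.Icc a b) x ∧
      -(x : ℂ) ^ 2 * ψ'' x - 2 * (x : ℂ) * ψ' x - ψ x / 4 = lam * ψ x) ∧
    ψ a = 0 ∧ ψ b = 0

namespace BK
open Set

lemma aux1 (x A B s : ℝ) (hx : 0 < x) (hs : 0 < s) (hsq : s * s = x) :
    (A - B / 2) / (x * s) = (A * (1/x) * s - B * (1/(2*s))) / s^2 := by
  field_simp
  linear_combination (-B) * hsq

lemma hasDerivAt_logdiv {a x : ℝ} (ha : 0 < a) (hx : 0 < x) :
    HasDerivAt (fun y => Real.log (y / a)) (1 / x) x := by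
  have h : HasDerivAt (fun y : ℝ => y / a) (1 / a) x := by
    simpa using (hasDerivAt_id x).div_const a
  have := (Real.hasDerivAt_log (by positivity : x / a ≠ 0)).comp x h
  refine this.congr_deriv ?_
  field_simp

lemma hasDerivAt_G {g g' : ℝ → ℝ} (hg : ∀ t, HasDerivAt g (g' t) t)
    {a x : ℝ} (ha : 0 < a) (hx : 0 < x) :
    HasDerivAt (fun y => g (Real.log (y / a)) / Real.sqrt y)
      ((g' (Real.log (x / a)) - g (Real.log (x / a)) / 2) / (x * Real.sqrt x)) x := by
  have hl := hasDerivAt_logdiv ha hx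
  have h1 : HasDerivAt (fun y => g (Real.log (y / a))) (g' (Real.log (x / a)) * (1 / x)) x :=
    (hg _).comp x hl
  have hs : HasDerivAt Real.sqrt (1 / (2 * Real.sqrt x)) x := Real.hasDerivAt_sqrt hx.ne'
  have hsx : (0:ℝ) < Real.sqrt x := Real.sqrt_pos.mpr hx
  have h2 := h1.div hs hsx.ne'
  exact h2.congr_deriv (aux1 x _ _ _ hx hsx (Real.mul_self_sqrt hx.le)).symm

lemma hasDerivAt_G2 {g g' g'' : ℝ → ℝ} (hg : ∀ t, HasDerivAt g (g' t) t)
    (hg' : ∀ t, HasDerivAt g' (g'' t) t) {a x : ℝ} (ha : 0 < a) (hx : 0 < x) :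
    HasDerivAt (fun y => (g' (Real.log (y / a)) - g (Real.log (y / a)) / 2) / (y * Real.sqrt y))
      ((g'' (Real.log (x / a)) - 2 * g' (Real.log (x / a)) + 3 / 4 * g (Real.log (x / a)))
        / (x ^ 2 * Real.sqrt x)) x := by
  have key : HasDerivAt (fun y => (g' (Real.log (y / a)) - g (Real.log (y / a)) / 2) / Real.sqrt y)
      ((g'' (Real.log (x / a)) - g' (Real.log (x / a)) / 2
        - (g' (Real.log (x / a)) - g (Real.log (x / a)) / 2) / 2) / (x * Real.sqrt x)) x :=
    hasDerivAt_G (g := fun t => g' t - g t / 2) (g' := fun t => g'' t - g' t / 2)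
      (fun t => (hg' t).sub ((hg t).div_const 2)) ha hx
  have h2 := key.div (hasDerivAt_id x) hx.ne'
  have heq : (fun y => (g' (Real.log (y / a)) - g (Real.log (y / a)) / 2) / Real.sqrt y / id y)
      = fun y => (g' (Real.log (y / a)) - g (Real.log (y / a)) / 2) / (y * Real.sqrt y) := by
    funext y
    simp [div_div, mul_comm]
  simp only [Pi.div_def] at h2
  rw [heq] at h2
  refine h2.congr_deriv ?_
  have hsx : (0:ℝ) < Real.sqrt x := Real.sqrt_pos.mpr hx
  simp only [id_eq]
  field_simp
  ring

/-- complexified solution functions -/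
noncomputable def U (g : ℝ → ℝ) (a : ℝ) : ℝ → ℂ :=
  fun y => ((g (Real.log (y / a)) / Real.sqrt y : ℝ) : ℂ)

noncomputable def U1 (g g' : ℝ → ℝ) (a : ℝ) : ℝ → ℂ :=
  fun y => (((g' (Real.log (y / a)) - g (Real.log (y / a)) / 2) / (y * Real.sqrt y) : ℝ) : ℂ)

noncomputable def U2 (g g' g'' : ℝ → ℝ) (a : ℝ) : ℝ → ℂ :=
  fun y => (((g'' (Real.log (y / a)) - 2 * g' (Real.log (y / a)) + 3 / 4 * g (Real.log (y / a)))
    / (y ^ 2 * Real.sqrt y) : ℝ) : ℂ)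

lemma solPackage {g g' g'' : ℝ → ℝ} (hg : ∀ t, HasDerivAt g (g' t) t)
    (hg' : ∀ t, HasDerivAt g' (g'' t) t) {μ a : ℝ} (hμ : ∀ t, g'' t = -μ * g t)
    (ha : 0 < a) {x : ℝ} (hx : 0 < x) :
    HasDerivAt (U g a) (U1 g g' a x) x ∧ HasDerivAt (U1 g g' a) (U2 g g' g'' a x) x ∧
      -(x : ℂ) ^ 2 * U2 g g' g'' a x - 2 * (x : ℂ) * U1 g g' a x - U g a x / 4
        = ((μ : ℝ) : ℂ) * U g a x := by
  refine ⟨(hasDerivAt_G hg ha hx).ofReal_comp, (hasDerivAt_G2 hg hg' ha hx).ofReal_comp, ?_⟩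
  have hsx : (0:ℝ) < Real.sqrt x := Real.sqrt_pos.mpr hx
  have hre : -x ^ 2 * ((g'' (Real.log (x / a)) - 2 * g' (Real.log (x / a))
        + 3 / 4 * g (Real.log (x / a))) / (x ^ 2 * Real.sqrt x))
      - 2 * x * ((g' (Real.log (x / a)) - g (Real.log (x / a)) / 2) / (x * Real.sqrt x))
      - (g (Real.log (x / a)) / Real.sqrt x) / 4
      = μ * (g (Real.log (x / a)) / Real.sqrt x) := by
    rw [hμ]
    field_simp
    ring
  unfold U U1 U2
  exact_mod_cast hre

lemma aux2 (HH GG G1 H1 x s : ℝ) (hs : s ≠ 0) (hsq : s * s = x) :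
    x ^ 2 * ((HH / s) * ((G1 - GG / 2) / (x * s)) - (GG / s) * ((H1 - HH / 2) / (x * s)))
      = HH * G1 - GG * H1 := by
  subst hsq
  field_simp
  ring

lemma wronskian_pair {g g' h h' : ℝ → ℝ} {a x : ℝ} (hx : 0 < x) :
    (x : ℂ) ^ 2 * (U h a x * U1 g g' a x - U g a x * U1 h h' a x)
      = ((h (Real.log (x / a)) * g' (Real.log (x / a))
          - g (Real.log (x / a)) * h' (Real.log (x / a)) : ℝ) : ℂ) := by
  have hsx : (0:ℝ) < Real.sqrt x := Real.sqrt_pos.mpr hx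
  have hsq : Real.sqrt x * Real.sqrt x = x := Real.mul_self_sqrt hx.le
  have hre : x ^ 2 * ((h (Real.log (x / a)) / Real.sqrt x)
        * ((g' (Real.log (x / a)) - g (Real.log (x / a)) / 2) / (x * Real.sqrt x))
      - (g (Real.log (x / a)) / Real.sqrt x)
        * ((h' (Real.log (x / a)) - h (Real.log (x / a)) / 2) / (x * Real.sqrt x)))
      = h (Real.log (x / a)) * g' (Real.log (x / a))
        - g (Real.log (x / a)) * h' (Real.log (x / a)) :=
    aux2 _ _ _ _ x _ hsx.ne' hsq
  unfold U U1
  exact_mod_cast hre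

lemma wronskian_const {a b : ℝ} {lam : ℂ}
    {ψ ψ' ψ'' u u₁ u₂ : ℝ → ℂ}
    (hψ : ∀ x ∈ Icc a b,
      HasDerivWithinAt ψ (ψ' x) (Icc a b) x ∧
      HasDerivWithinAt ψ' (ψ'' x) (Icc a b) x ∧
      -(x : ℂ) ^ 2 * ψ'' x - 2 * (x : ℂ) * ψ' x - ψ x / 4 = lam * ψ x)
    (hu : ∀ x ∈ Icc a b,
      HasDerivAt u (u₁ x) x ∧ HasDerivAt u₁ (u₂ x) x ∧
      -(x : ℂ) ^ 2 * u₂ x - 2 * (x : ℂ) * u₁ x - u x / 4 = lam * u x) :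
    ∀ x ∈ Icc a b, (x : ℂ) ^ 2 * (ψ x * u₁ x - ψ' x * u x)
      = (a : ℂ) ^ 2 * (ψ a * u₁ a - ψ' a * u a) := by
  set W : ℝ → ℂ := fun x => (x : ℂ) ^ 2 * (ψ x * u₁ x - ψ' x * u x) with hW
  have hx2 : ∀ x : ℝ, HasDerivAt (fun y : ℝ => ((y : ℂ)) ^ 2) (2 * (x:ℂ)) x := by
    intro x
    have : HasDerivAt (fun y : ℝ => ((y ^ 2 : ℝ) : ℂ)) (((2 * x : ℝ) : ℂ)) x :=
      HasDerivAt.ofReal_comp (by simpa using (hasDerivAt_pow 2 x))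
    simp only [Complex.ofReal_pow, Complex.ofReal_mul, Complex.ofReal_ofNat] at this
    exact this
  have hWd : ∀ x ∈ Icc a b, HasDerivWithinAt W 0 (Icc a b) x := by
    intro x hx
    obtain ⟨hψ1, hψ2, hψe⟩ := hψ x hx
    obtain ⟨hu1, hu2, hue⟩ := hu x hx
    have hd : HasDerivWithinAt W
        (2 * (x:ℂ) * (ψ x * u₁ x - ψ' x * u x)
          + (x:ℂ)^2 * ((ψ' x * u₁ x + ψ x * u₂ x) - (ψ'' x * u x + ψ' x * u₁ x)))
        (Icc a b) x :=
      (hx2 x).hasDerivWithinAt.mul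
        ((hψ1.mul hu2.hasDerivWithinAt).sub (hψ2.mul hu1.hasDerivWithinAt))
    have hz : 2 * (x:ℂ) * (ψ x * u₁ x - ψ' x * u x)
          + (x:ℂ)^2 * ((ψ' x * u₁ x + ψ x * u₂ x) - (ψ'' x * u x + ψ' x * u₁ x)) = 0 := by
      linear_combination (u x) * hψe - (ψ x) * hue
    rwa [hz] at hd
  have hcont : ContinuousOn W (Icc a b) := fun x hx => (hWd x hx).continuousWithinAt
  exact constant_of_has_deriv_right_zero hcont (fun x hx =>
    (hWd x (Ico_subset_Icc_self hx)).mono_of_mem_nhdsWithin (Icc_mem_nhdsGE_of_mem hx))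

/-- main representation: ψ is a multiple of u on [a,b] -/
lemma represent {a b : ℝ} (ha : 0 < a) (hab : a < b) {lam c : ℂ} (hc : c ≠ 0)
    {ψ ψ' ψ'' u u₁ u₂ v v₁ v₂ : ℝ → ℂ}
    (hψ : ∀ x ∈ Icc a b,
      HasDerivWithinAt ψ (ψ' x) (Icc a b) x ∧
      HasDerivWithinAt ψ' (ψ'' x) (Icc a b) x ∧
      -(x : ℂ) ^ 2 * ψ'' x - 2 * (x : ℂ) * ψ' x - ψ x / 4 = lam * ψ x)
    (hψa : ψ a = 0)
    (hu : ∀ x ∈ Icc a b,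
      HasDerivAt u (u₁ x) x ∧ HasDerivAt u₁ (u₂ x) x ∧
      -(x : ℂ) ^ 2 * u₂ x - 2 * (x : ℂ) * u₁ x - u x / 4 = lam * u x)
    (hv : ∀ x ∈ Icc a b,
      HasDerivAt v (v₁ x) x ∧ HasDerivAt v₁ (v₂ x) x ∧
      -(x : ℂ) ^ 2 * v₂ x - 2 * (x : ℂ) * v₁ x - v x / 4 = lam * v x)
    (hua : u a = 0)
    (hw : ∀ x ∈ Icc a b, (x : ℂ) ^ 2 * (v x * u₁ x - u x * v₁ x) = c) :
    ∃ C : ℂ, ∀ x ∈ Icc a b, ψ x = C * u x := by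
  have hWu := wronskian_const hψ hu
  have hWv := wronskian_const hψ hv
  refine ⟨(a : ℂ) ^ 2 * ψ' a * v a / c, fun x hx => ?_⟩
  have h1 := hWu x hx
  have h2 := hWv x hx
  have h3 := hw x hx
  rw [hψa, hua] at h1
  rw [hψa] at h2
  simp only [zero_mul, mul_zero, sub_zero, zero_sub, mul_neg] at h1 h2
  -- h1 : x² (ψ u₁ - ψ' u) = 0 ;  h2 : x² (ψ v₁ - ψ' v) = -(a² (ψ' a * v a))
  -- key identity: c * ψ x = v x * (x²(ψu₁-ψ'u)) - u x * (x²(ψv₁-ψ'v))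
  have key : c * ψ x = v x * ((x:ℂ)^2 * (ψ x * u₁ x - ψ' x * u x))
      - u x * ((x:ℂ)^2 * (ψ x * v₁ x - ψ' x * v x)) := by
    linear_combination (ψ x) * h3.symm
  rw [h1, h2] at key
  field_simp
  linear_combination key

lemma hgsin (k : ℝ) : ∀ t, HasDerivAt (fun t => Real.sin (k * t)) (k * Real.cos (k * t)) t := by
  intro t
  have h := (Real.hasDerivAt_sin (k * t)).comp t ((hasDerivAt_id t).const_mul k)
  exact h.congr_deriv (by ring)

lemma hgcos (k : ℝ) : ∀ t, HasDerivAt (fun t => Real.cos (k * t)) (-(k * Real.sin (k * t))) t := by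
  intro t
  have h := (Real.hasDerivAt_cos (k * t)).comp t ((hasDerivAt_id t).const_mul k)
  exact h.congr_deriv (by ring)

lemma hgsin' (k : ℝ) :
    ∀ t, HasDerivAt (fun t => k * Real.cos (k * t)) (-(k ^ 2) * Real.sin (k * t)) t := by
  intro t
  have h := (hgcos k t).const_mul k
  exact h.congr_deriv (by ring)

lemma hgcos' (k : ℝ) :
    ∀ t, HasDerivAt (fun t => -(k * Real.sin (k * t))) (-(k ^ 2) * Real.cos (k * t)) t := by
  intro t
  have h := ((hgsin k t).const_mul k).neg
  exact h.congr_deriv (by ring)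

/-- the sine solution -/
noncomputable def us (k a : ℝ) : ℝ → ℂ := U (fun t => Real.sin (k * t)) a
noncomputable def us1 (k a : ℝ) : ℝ → ℂ :=
  U1 (fun t => Real.sin (k * t)) (fun t => k * Real.cos (k * t)) a
noncomputable def us2 (k a : ℝ) : ℝ → ℂ :=
  U2 (fun t => Real.sin (k * t)) (fun t => k * Real.cos (k * t))
    (fun t => -(k ^ 2) * Real.sin (k * t)) a
noncomputable def uc (k a : ℝ) : ℝ → ℂ := U (fun t => Real.cos (k * t)) a
noncomputable def uc1 (k a : ℝ) : ℝ → ℂ :=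
  U1 (fun t => Real.cos (k * t)) (fun t => -(k * Real.sin (k * t))) a
noncomputable def uc2 (k a : ℝ) : ℝ → ℂ :=
  U2 (fun t => Real.cos (k * t)) (fun t => -(k * Real.sin (k * t)))
    (fun t => -(k ^ 2) * Real.cos (k * t)) a
noncomputable def uid (a : ℝ) : ℝ → ℂ := U (fun t => t) a
noncomputable def uid1 (a : ℝ) : ℝ → ℂ := U1 (fun t => t) (fun _ => 1) a
noncomputable def uid2 (a : ℝ) : ℝ → ℂ := U2 (fun t => t) (fun _ => 1) (fun _ => 0) a
noncomputable def uone (a : ℝ) : ℝ → ℂ := U (fun _ => 1) a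
noncomputable def uone1 (a : ℝ) : ℝ → ℂ := U1 (fun _ => 1) (fun _ => 0) a
noncomputable def uone2 (a : ℝ) : ℝ → ℂ := U2 (fun _ => 1) (fun _ => 0) (fun _ => 0) a

lemma sin_sol {a : ℝ} (ha : 0 < a) (k : ℝ) {x : ℝ} (hx : 0 < x) :
    HasDerivAt (us k a) (us1 k a x) x ∧ HasDerivAt (us1 k a) (us2 k a x) x ∧
      -(x : ℂ) ^ 2 * us2 k a x - 2 * (x : ℂ) * us1 k a x - us k a x / 4
        = (k : ℂ) ^ 2 * us k a x := by
  have h := solPackage (hgsin k) (hgsin' k) (μ := k ^ 2) (fun t => by ring) ha hx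
  refine ⟨h.1, h.2.1, ?_⟩
  rw [show ((k : ℂ)) ^ 2 = ((k ^ 2 : ℝ) : ℂ) by push_cast; ring]
  exact h.2.2

lemma cos_sol {a : ℝ} (ha : 0 < a) (k : ℝ) {x : ℝ} (hx : 0 < x) :
    HasDerivAt (uc k a) (uc1 k a x) x ∧ HasDerivAt (uc1 k a) (uc2 k a x) x ∧
      -(x : ℂ) ^ 2 * uc2 k a x - 2 * (x : ℂ) * uc1 k a x - uc k a x / 4
        = (k : ℂ) ^ 2 * uc k a x := by
  have h := solPackage (hgcos k) (hgcos' k) (μ := k ^ 2) (fun t => by ring) ha hx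
  refine ⟨h.1, h.2.1, ?_⟩
  rw [show ((k : ℂ)) ^ 2 = ((k ^ 2 : ℝ) : ℂ) by push_cast; ring]
  exact h.2.2

lemma id_sol {a : ℝ} (ha : 0 < a) {x : ℝ} (hx : 0 < x) :
    HasDerivAt (uid a) (uid1 a x) x ∧ HasDerivAt (uid1 a) (uid2 a x) x ∧
      -(x : ℂ) ^ 2 * uid2 a x - 2 * (x : ℂ) * uid1 a x - uid a x / 4 = 0 * uid a x := by
  have h := solPackage (g := fun t => t) (g' := fun _ => 1) (g'' := fun _ => 0)
    (fun t => hasDerivAt_id t) (fun t => hasDerivAt_const t 1) (μ := 0)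
    (fun t => by ring) ha hx
  refine ⟨h.1, h.2.1, ?_⟩
  simpa [uid, uid1, uid2] using h.2.2

lemma one_sol {a : ℝ} (ha : 0 < a) {x : ℝ} (hx : 0 < x) :
    HasDerivAt (uone a) (uone1 a x) x ∧ HasDerivAt (uone1 a) (uone2 a x) x ∧
      -(x : ℂ) ^ 2 * uone2 a x - 2 * (x : ℂ) * uone1 a x - uone a x / 4 = 0 * uone a x := by
  have h := solPackage (g := fun _ => (1:ℝ)) (g' := fun _ => 0) (g'' := fun _ => 0)
    (fun t => hasDerivAt_const t 1) (fun t => hasDerivAt_const t 0) (μ := 0)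
    (fun t => by ring) ha hx
  refine ⟨h.1, h.2.1, ?_⟩
  simpa [uone, uone1, uone2] using h.2.2

lemma hw_sincos {a : ℝ} (k : ℝ) {x : ℝ} (hx : 0 < x) :
    (x : ℂ) ^ 2 * (uc k a x * us1 k a x - us k a x * uc1 k a x) = (k : ℂ) := by
  have h := wronskian_pair (g := fun t => Real.sin (k * t)) (g' := fun t => k * Real.cos (k * t))
    (h := fun t => Real.cos (k * t)) (h' := fun t => -(k * Real.sin (k * t))) (a := a) hx
  rw [show (uc k a x * us1 k a x - us k a x * uc1 k a x)
      = (U (fun t => Real.cos (k*t)) a x * U1 (fun t => Real.sin (k*t)) (fun t => k * Real.cos (k*t)) a x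
        - U (fun t => Real.sin (k*t)) a x * U1 (fun t => Real.cos (k*t)) (fun t => -(k * Real.sin (k*t))) a x) from rfl,
    h]
  norm_cast
  linear_combination k * Real.sin_sq_add_cos_sq (k * Real.log (x / a))

lemma hw_idone {a : ℝ} {x : ℝ} (hx : 0 < x) :
    (x : ℂ) ^ 2 * (uone a x * uid1 a x - uid a x * uone1 a x) = 1 := by
  have h := wronskian_pair (g := fun t : ℝ => t) (g' := fun _ => (1:ℝ))
    (h := fun _ => (1:ℝ)) (h' := fun _ => (0:ℝ)) (a := a) hx
  rw [show (uone a x * uid1 a x - uid a x * uone1 a x)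
      = (U (fun _ => (1:ℝ)) a x * U1 (fun t : ℝ => t) (fun _ => 1) a x
        - U (fun t : ℝ => t) a x * U1 (fun _ => (1:ℝ)) (fun _ => 0) a x) from rfl, h]
  norm_num

/-- if `lam` is an eigenvalue and `(u, v)` is a fundamental pair with `u a = 0`,
then `u b = 0`. -/
lemma ub_zero {a b : ℝ} (ha : 0 < a) (hab : a < b) {lam c : ℂ} (hc : c ≠ 0)
    {u u₁ u₂ v v₁ v₂ : ℝ → ℂ}
    (hu : ∀ x ∈ Icc a b,
      HasDerivAt u (u₁ x) x ∧ HasDerivAt u₁ (u₂ x) x ∧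
      -(x : ℂ) ^ 2 * u₂ x - 2 * (x : ℂ) * u₁ x - u x / 4 = lam * u x)
    (hv : ∀ x ∈ Icc a b,
      HasDerivAt v (v₁ x) x ∧ HasDerivAt v₁ (v₂ x) x ∧
      -(x : ℂ) ^ 2 * v₂ x - 2 * (x : ℂ) * v₁ x - v x / 4 = lam * v x)
    (hua : u a = 0)
    (hw : ∀ x ∈ Icc a b, (x : ℂ) ^ 2 * (v x * u₁ x - u x * v₁ x) = c)
    (heig : ∃ ψ ψ' ψ'' : ℝ → ℂ,
      (∃ x ∈ Set.Icc a b, ψ x ≠ 0) ∧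
      (∀ x ∈ Set.Icc a b,
        HasDerivWithinAt ψ (ψ' x) (Set.Icc a b) x ∧
        HasDerivWithinAt ψ' (ψ'' x) (Set.Icc a b) x ∧
        -(x : ℂ) ^ 2 * ψ'' x - 2 * (x : ℂ) * ψ' x - ψ x / 4 = lam * ψ x) ∧
      ψ a = 0 ∧ ψ b = 0) :
    u b = 0 := by
  obtain ⟨ψ, ψ', ψ'', ⟨x₀, hx₀, hne⟩, hODE, hψa, hψb⟩ := heig
  obtain ⟨C, hC⟩ := represent ha hab hc hODE hψa hu hv hua hw
  by_contra hub
  have hb : ψ b = C * u b := hC b (right_mem_Icc.mpr hab.le)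
  have hCz : C = 0 := by
    rcases mul_eq_zero.mp (hb ▸ hψb : C * u b = 0) with h | h
    · exact h
    · exact absurd h hub
  exact hne (by rw [hC x₀ hx₀, hCz, zero_mul])

lemma us_a {a : ℝ} (ha : 0 < a) (k : ℝ) : us k a a = 0 := by
  simp [us, U, div_self ha.ne']

lemma us_b {a b : ℝ} (ha : 0 < a) (hb : 0 < b) (k : ℝ)
    (h : Real.sin (k * Real.log (b / a)) = 0) : us k a b = 0 := by
  simp [us, U, h]

lemma uid_a {a : ℝ} (ha : 0 < a) : uid a a = 0 := by
  simp [uid, U, div_self ha.ne']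

end BK
/-- For `0 < a < b`, the positive eigenvalues `λ = k²` (`k > 0`) of the
"squared" Berry-Keating operator on `[a,b]` with Dirichlet boundary
conditions are exactly `k_n = πn/log(b/a)`, `n ≥ 1`, with eigenfunctions
`ψ_n(x) = x^{-1/2} sin(k_n log(x/a))`; moreover `λ = 0` is not an
eigenvalue. -/
theorem stmt_16 (a b : ℝ) (ha : 0 < a) (hab : a < b) :
    (∀ k : ℝ, 0 < k →
      (IsDirichletEigenvalue a b ((k : ℂ) ^ 2)
        ↔ ∃ n : ℕ, 1 ≤ n ∧ k = π * n / Real.log (b / a))) ∧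
    -- the explicit eigenfunctions ψ_n(x) = x^{-1/2} sin(k_n log(x/a))
    (∀ n : ℕ, 1 ≤ n →
      let kn : ℝ := π * n / Real.log (b / a)
      let ψn : ℝ → ℂ := fun x =>
        ((Real.sin (kn * Real.log (x / a)) / Real.sqrt x : ℝ) : ℂ)
      (∃ ψ' ψ'' : ℝ → ℂ,
        (∀ x ∈ Set.Icc a b,
          HasDerivWithinAt ψn (ψ' x) (Set.Icc a b) x ∧
          HasDerivWithinAt ψ' (ψ'' x) (Set.Icc a b) x ∧
          -(x : ℂ) ^ 2 * ψ'' x - 2 * (x : ℂ) * ψ' x - ψn x / 4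
            = ((kn : ℂ)) ^ 2 * ψn x)) ∧
      (∃ x ∈ Set.Icc a b, ψn x ≠ 0) ∧ ψn a = 0 ∧ ψn b = 0) ∧
    ¬ IsDirichletEigenvalue a b 0 := by
  have hb : 0 < b := ha.trans hab
  have hL : 0 < Real.log (b / a) := Real.log_pos ((one_lt_div ha).mpr hab)
  -- packaged triples
  have husinW : ∀ k : ℝ, ∀ x ∈ Set.Icc a b,
      HasDerivWithinAt (BK.us k a) (BK.us1 k a x) (Set.Icc a b) x ∧
      HasDerivWithinAt (BK.us1 k a) (BK.us2 k a x) (Set.Icc a b) x ∧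
      -(x : ℂ) ^ 2 * BK.us2 k a x - 2 * (x : ℂ) * BK.us1 k a x - BK.us k a x / 4
        = (k : ℂ) ^ 2 * BK.us k a x := by
    intro k x hx
    obtain ⟨h1, h2, h3⟩ := BK.sin_sol ha k (lt_of_lt_of_le ha hx.1)
    exact ⟨h1.hasDerivWithinAt, h2.hasDerivWithinAt, h3⟩
  have sinb : ∀ n : ℕ, Real.sin ((π * n / Real.log (b / a)) * Real.log (b / a)) = 0 := by
    intro n
    rw [div_mul_cancel₀ _ hL.ne', mul_comm]
    exact Real.sin_nat_mul_pi n
  have nonzero_pt : ∀ n : ℕ, 1 ≤ n →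
      ∃ x ∈ Set.Icc a b, BK.us (π * n / Real.log (b / a)) a x ≠ 0 := by
    intro n hn
    have hn0 : (n : ℝ) ≠ 0 := Nat.cast_ne_zero.mpr (by omega)
    have hnpos : (0:ℝ) < n := by positivity
    have hn1 : (1:ℝ) ≤ n := by exact_mod_cast hn
    set e : ℝ := Real.exp (Real.log (b / a) / (2 * n)) with he
    have hx0 : 0 < a * e := by positivity
    refine ⟨a * e, ⟨?_, ?_⟩, ?_⟩
    · exact le_mul_of_one_le_right ha.le (Real.one_le_exp (by positivity))
    · have h1 : e ≤ Real.exp (Real.log (b / a)) :=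
        Real.exp_le_exp.mpr (div_le_self hL.le (by nlinarith [hn1]))
      rw [Real.exp_log (div_pos hb ha)] at h1
      calc a * e ≤ a * (b / a) := by nlinarith
        _ = b := by field_simp
    · have hxa : a * e / a = e := by
        rw [mul_comm, mul_div_assoc, div_self ha.ne', mul_one]
      have hlog : Real.log (a * e / a) = Real.log (b / a) / (2 * n) := by
        rw [hxa, he, Real.log_exp]
      have harg : (π * n / Real.log (b / a)) * (Real.log (b / a) / (2 * n)) = π / 2 := by
        field_simp
      show BK.us (π * n / Real.log (b / a)) a (a * e) ≠ 0
      unfold BK.us BK.U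
      simp only [hlog, harg, Real.sin_pi_div_two]
      exact Complex.ofReal_ne_zero.mpr (by positivity)
  refine ⟨?_, ?_, ?_⟩
  · -- part 1
    intro k hk
    constructor
    · intro heig
      have hub : BK.us k a b = 0 :=
        BK.ub_zero ha hab (show (k:ℂ) ≠ 0 from Complex.ofReal_ne_zero.mpr hk.ne')
          (fun x hx => BK.sin_sol ha k (lt_of_lt_of_le ha hx.1))
          (fun x hx => BK.cos_sol ha k (lt_of_lt_of_le ha hx.1))
          (BK.us_a ha k)
          (fun x hx => BK.hw_sincos k (lt_of_lt_of_le ha hx.1)) heig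
      unfold BK.us BK.U at hub
      have h' : Real.sin (k * Real.log (b / a)) / Real.sqrt b = 0 := by
        exact_mod_cast hub
      have hsin : Real.sin (k * Real.log (b / a)) = 0 := by
        rcases div_eq_zero_iff.mp h' with h | h
        · exact h
        · exact absurd h (Real.sqrt_pos.mpr hb).ne'
      obtain ⟨m, hm⟩ := Real.sin_eq_zero_iff.mp hsin
      have hm0 : 0 < m := by
        by_contra h
        push_neg at h
        have h1 : (m : ℝ) ≤ 0 := by exact_mod_cast h
        nlinarith [Real.pi_pos, mul_pos hk hL]
      refine ⟨m.toNat, by omega, ?_⟩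
      have hcast : ((m.toNat : ℕ) : ℝ) = (m : ℝ) := by
        exact_mod_cast Int.toNat_of_nonneg hm0.le
      rw [hcast, eq_div_iff hL.ne']
      linarith [hm]
    · rintro ⟨n, hn, rfl⟩
      exact ⟨BK.us _ a, BK.us1 _ a, BK.us2 _ a, nonzero_pt n hn, husinW _,
        BK.us_a ha _, BK.us_b ha hb _ (sinb n)⟩
  · -- part 2
    intro n hn
    intro kn ψn
    exact ⟨⟨BK.us1 kn a, BK.us2 kn a, husinW kn⟩, nonzero_pt n hn,
      BK.us_a ha kn, BK.us_b ha hb kn (sinb n)⟩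
  · -- part 3
    intro heig
    have hub : BK.uid a b = 0 :=
      BK.ub_zero ha hab one_ne_zero
        (fun x hx => BK.id_sol ha (lt_of_lt_of_le ha hx.1))
        (fun x hx => BK.one_sol ha (lt_of_lt_of_le ha hx.1))
        (BK.uid_a ha)
        (fun x hx => BK.hw_idone (lt_of_lt_of_le ha hx.1)) heig
    unfold BK.uid BK.U at hub
    have h' : Real.log (b / a) / Real.sqrt b = 0 := by exact_mod_cast hub
    rcases div_eq_zero_iff.mp h' with h | h
    · exact hL.ne' h
    · exact (Real.sqrt_pos.mpr hb).ne' h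
end
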